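/- Let $f, f_0: \mathbb{R}^p \to \mathbb{R}$ and $\gamma, \gamma_0: \mathbb{R}^p \to \mathbb{R}$ be measurable, and let $(X, V)$ be random variables such that $f(X) + \gamma(V) = f_0(X) + \gamma_0(V)$ almost surely. Set $h := f - f_0$ and $g := \gamma - \gamma_0$. If the implication "$h(X) + g(V) = 0$ a.s. implies there exists measurable $\delta: \mathbb{R}^{p-q} \to \mathbb{R}$ with $h(X) = \delta(R^\top X)$ a.s." holds, then $f(X) + E[\gamma(V) \mid R^\top X] = f_0(X) + E[\gamma_0(V) \mid R^\top X]$ almost surely, where $R^\top X = R^\top V$ almost surely. -/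

import Mathlib

open Matrix MeasureTheory

/-- if `f(X) + γ(V) = f₀(X) + γ₀(V)` a.s., `Rᵀ X = Rᵀ V` a.s., and every
a.s. solution of `h(X) + g(V) = 0` satisfies `h(X) = δ(Rᵀ X)` a.s. for some measurable
`δ`, then `f(X) + E[γ(V)|Rᵀ X] = f₀(X) + E[γ₀(V)|Rᵀ X]` a.s. -/
theorem stmt14 {p q : ℕ} {Ω : Type*} [MeasurableSpace Ω]
    (μ : Measure Ω) [IsProbabilityMeasure μ]
    (R : Matrix (Fin p) (Fin (p - q)) ℝ)
    (X V : Ω → Fin p → ℝ) (hXm : Measurable X) (hVm : Measurable V)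
    (f f0 γ γ0 : (Fin p → ℝ) → ℝ)
    (hfm : Measurable f) (hf0m : Measurable f0)
    (hγm : Measurable γ) (hγ0m : Measurable γ0)
    (hγint : Integrable (fun ω => γ (V ω)) μ)
    (hγ0int : Integrable (fun ω => γ0 (V ω)) μ)
    (heq : ∀ᵐ ω ∂μ, f (X ω) + γ (V ω) = f0 (X ω) + γ0 (V ω))
    (hRXV : ∀ᵐ ω ∂μ, Rᵀ *ᵥ X ω = Rᵀ *ᵥ V ω)
    (hident : (∀ᵐ ω ∂μ, (f (X ω) - f0 (X ω)) + (γ (V ω) - γ0 (V ω)) = 0) →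
      ∃ δ : (Fin (p - q) → ℝ) → ℝ, Measurable δ ∧
        ∀ᵐ ω ∂μ, f (X ω) - f0 (X ω) = δ (Rᵀ *ᵥ X ω)) :
    (fun ω => f (X ω) +
        (μ[fun ω => γ (V ω) |
          MeasurableSpace.comap (fun ω => Rᵀ *ᵥ X ω) inferInstance]) ω) =ᵐ[μ]
      fun ω => f0 (X ω) +
        (μ[fun ω => γ0 (V ω) |
          MeasurableSpace.comap (fun ω => Rᵀ *ᵥ X ω) inferInstance]) ω := by
  have hTm : Measurable (fun x : Fin p → ℝ => Rᵀ *ᵥ x) :=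
    (Matrix.mulVecLin Rᵀ).continuous_of_finiteDimensional.measurable
  have hXT : Measurable (fun ω => Rᵀ *ᵥ X ω) := hTm.comp hXm
  have hm : MeasurableSpace.comap (fun ω => Rᵀ *ᵥ X ω) inferInstance
      ≤ (inferInstance : MeasurableSpace Ω) := hXT.comap_le
  set m : MeasurableSpace Ω :=
    MeasurableSpace.comap (fun ω => Rᵀ *ᵥ X ω) inferInstance with hm_def
  have heq' : ∀ᵐ ω ∂μ, (f (X ω) - f0 (X ω)) + (γ (V ω) - γ0 (V ω)) = 0 := by
    filter_upwards [heq] with ω h; linarith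
  obtain ⟨δ, hδm, hδ⟩ := hident heq'
  have hg : (fun ω => γ (V ω) - γ0 (V ω)) =ᵐ[μ]
      (fun ω => -δ (Rᵀ *ᵥ X ω)) := by
    filter_upwards [heq, hδ] with ω h1 h2; linarith
  have hδmeas : Measurable[m] (fun ω => δ (Rᵀ *ᵥ X ω)) :=
    hδm.comp (Measurable.of_comap_le le_rfl)
  have hδint : Integrable (fun ω => -δ (Rᵀ *ᵥ X ω)) μ :=
    (hγint.sub hγ0int).congr hg
  have hce : μ[fun ω => -δ (Rᵀ *ᵥ X ω) | m] =ᵐ[μ]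
      (fun ω => -δ (Rᵀ *ᵥ X ω)) :=
    Filter.EventuallyEq.of_eq (condExp_of_stronglyMeasurable (μ := μ) hm
      (hδmeas.neg.stronglyMeasurable) hδint)
  have hsub : μ[fun ω => γ (V ω) | m] - μ[fun ω => γ0 (V ω) | m] =ᵐ[μ]
      (fun ω => -δ (Rᵀ *ᵥ X ω)) := by
    calc μ[fun ω => γ (V ω) | m] - μ[fun ω => γ0 (V ω) | m]
        =ᵐ[μ] μ[fun ω => γ (V ω) - γ0 (V ω) | m] := (condExp_sub hγint hγ0int m).symm
      _ =ᵐ[μ] μ[fun ω => -δ (Rᵀ *ᵥ X ω) | m] := condExp_congr_ae hg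
      _ =ᵐ[μ] (fun ω => -δ (Rᵀ *ᵥ X ω)) := hce
  filter_upwards [hsub, hδ] with ω h1 h2
  have h1' : (μ[fun ω => γ (V ω) | m]) ω - (μ[fun ω => γ0 (V ω) | m]) ω
      = -δ (Rᵀ *ᵥ X ω) := h1
  show f (X ω) + (μ[fun ω => γ (V ω) | m]) ω = f0 (X ω) + (μ[fun ω => γ0 (V ω) | m]) ω
  linarith
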